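/- Let n = 2, c = 2, and O = {a, b, c, d}, and let f be an anonymous, neutral, SD-efficient assignment rule. At the profile where agent 1 reports a ≻ b ≻ c ≻ d and agent 2 reports b ≻ a ≻ c ≻ d, f must return the random assignment giving agent 1 object a with probability 1 and objects c and d each with probability 1/2, and agent 2 object b with probability 1 and objects c and d each with probability 1/2. -/

import Mathlib

open Finset
open scoped Classical

/-- A (binary-relation) preference over `m` objects; `R a b` means `a ≿ b`. -/
abbrev Pref (m : ℕ) := Fin m → Fin m → Prop

/-- A strict (linear) preference: reflexive, transitive, antisymmetric and total
weak relation `≿`, i.e. a linear order on the objects. -/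
def IsStrictPref {m : ℕ} (R : Pref m) : Prop :=
  (∀ a, R a a) ∧ (∀ a b c, R a b → R b c → R a c) ∧
  (∀ a b, R a b → R b a → a = b) ∧ (∀ a b, R a b ∨ R b a)

/-- A profile of strict preferences, one for each agent. -/
def ValidProfile {n m : ℕ} (pref : Fin n → Pref m) : Prop :=
  ∀ i, IsStrictPref (pref i)

/-- `x` (first-order) stochastically dominates `y` w.r.t. preference `R`:
for every object `o`, the total mass on objects weakly preferred to `o`
under `x` is at least that under `y`. -/
def sdPrefers {m : ℕ} (R : Pref m) (x y : Fin m → ℝ) : Prop :=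
  ∀ o : Fin m,
    ∑ o' ∈ univ.filter (fun o' => R o' o), x o' ≥
    ∑ o' ∈ univ.filter (fun o' => R o' o), y o'

/-- Strict stochastic dominance. -/
def sdStrict {m : ℕ} (R : Pref m) (x y : Fin m → ℝ) : Prop :=
  sdPrefers R x y ∧ ¬ sdPrefers R y x

/-- Strict downward-lexicographic (DL) preference of `x` over `y`:
at the most preferred object where they differ, `x` gives more. -/
def dlStrict {m : ℕ} (R : Pref m) (x y : Fin m → ℝ) : Prop :=
  ∃ o : Fin m, x o > y o ∧ ∀ o', x o' ≠ y o' → R o o'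

/-- Weak DL preference. -/
def dlPrefers {m : ℕ} (R : Pref m) (x y : Fin m → ℝ) : Prop :=
  x = y ∨ dlStrict R x y

/-- A random assignment: entries in `[0,1]`, every object fully allocated
(column sums `1`), every agent receiving `c` units (row sums `c`). -/
def IsRandomAssignment (n m c : ℕ) (p : Fin n → Fin m → ℝ) : Prop :=
  (∀ i o, 0 ≤ p i o ∧ p i o ≤ 1) ∧
  (∀ o, ∑ i, p i o = 1) ∧
  (∀ i, ∑ o, p i o = (c : ℝ))

/-- A discrete (0/1) matrix. -/
def IsDiscreteAlloc (n m : ℕ) (p : Fin n → Fin m → ℝ) : Prop :=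
  ∀ i o, p i o = 0 ∨ p i o = 1

/-- `p` is SD-efficient at profile `pref`: no random assignment `q` weakly
SD-dominates it for everyone and strictly for someone. -/
def SDEfficientAssignment (n m c : ℕ) (pref : Fin n → Pref m)
    (p : Fin n → Fin m → ℝ) : Prop :=
  ¬ ∃ q : Fin n → Fin m → ℝ, IsRandomAssignment n m c q ∧
      (∀ i, sdPrefers (pref i) (q i) (p i)) ∧
      ∃ j, sdStrict (pref j) (q j) (p j)

/-- Anonymity of an assignment rule: permuting the agents' reports permutes
their allocations accordingly. -/
def Anonymous (n m : ℕ) (f : (Fin n → Pref m) → Fin n → Fin m → ℝ) : Prop :=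
  ∀ (pref : Fin n → Pref m) (σ : Equiv.Perm (Fin n)), ValidProfile pref →
    ∀ i, f (fun j => pref (σ j)) i = f pref (σ i)

/-- Neutrality of an assignment rule: relabelling the objects (in all
preferences) relabels the returned assignment accordingly. -/
def Neutral (n m : ℕ) (f : (Fin n → Pref m) → Fin n → Fin m → ℝ) : Prop :=
  ∀ (pref : Fin n → Pref m) (τ : Equiv.Perm (Fin m)), ValidProfile pref →
    ∀ i o, f (fun j a b => pref j (τ.symm a) (τ.symm b)) i o = f pref i (τ.symm o)

/-- Weak SD-strategyproofness: no agent can misreport and obtain an allocation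
he strictly SD-prefers (w.r.t. his true preference). -/
def WeakSDSP (n m : ℕ) (f : (Fin n → Pref m) → Fin n → Fin m → ℝ) : Prop :=
  ¬ ∃ (pref : Fin n → Pref m) (i : Fin n) (R' : Pref m),
      ValidProfile pref ∧ IsStrictPref R' ∧
      sdStrict (pref i) (f (Function.update pref i R') i) (f pref i)

/-- Weak SD group-strategyproofness: no nonempty coalition can jointly
misreport so that every member strictly SD-prefers the new allocation. -/
def WeakSDGroupSP (n m : ℕ) (f : (Fin n → Pref m) → Fin n → Fin m → ℝ) : Prop :=
  ¬ ∃ (pref pref' : Fin n → Pref m) (S : Finset (Fin n)),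
      ValidProfile pref ∧ S.Nonempty ∧
      (∀ i ∈ S, IsStrictPref (pref' i)) ∧
      (∀ i ∉ S, pref' i = pref i) ∧
      ∀ i ∈ S, sdStrict (pref i) (f pref' i) (f pref i)

/-- DL-strategyproofness: truth-telling always yields a weakly DL-preferred
allocation. -/
def DLSP (n m : ℕ) (f : (Fin n → Pref m) → Fin n → Fin m → ℝ) : Prop :=
  ∀ (pref : Fin n → Pref m) (i : Fin n) (R' : Pref m),
    ValidProfile pref → IsStrictPref R' →
    dlPrefers (pref i) (f pref i) (f (Function.update pref i R') i)

/-- The set of the `c` most preferred objects under the strict preference `R`: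
objects having at most `c` objects weakly preferred to them. -/
noncomputable def topSet (m c : ℕ) (R : Pref m) : Finset (Fin m) :=
  univ.filter (fun o => (univ.filter (fun o' => R o' o)).card ≤ c)

/-- A perfect assignment: every agent receives each of his `c` most preferred
objects with probability `1`. -/
def PerfectAssignment (n m c : ℕ) (pref : Fin n → Pref m) (p : Fin n → Fin m → ℝ) : Prop :=
  ∀ i, ∀ o ∈ topSet m c (pref i), p i o = 1

/-- Ex post efficiency: `p` is a convex combination of SD-efficient discrete
assignments. -/
def ExPostEfficient (n m c : ℕ) (pref : Fin n → Pref m)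
    (p : Fin n → Fin m → ℝ) : Prop :=
  ∃ (k : ℕ) (w : Fin k → ℝ) (d : Fin k → Fin n → Fin m → ℝ),
    (∀ j, 0 ≤ w j) ∧ (∑ j, w j = 1) ∧
    (∀ j, IsDiscreteAlloc n m (d j) ∧ IsRandomAssignment n m c (d j) ∧
          SDEfficientAssignment n m c pref (d j)) ∧
    (∀ i o, p i o = ∑ j, w j * d j i o)

/-- A (possibly unbalanced) 0/1 allocation matrix: 0/1 entries, every object
assigned to exactly one agent. -/
def ZeroOneAlloc (n m : ℕ) (p : Fin n → Fin m → ℝ) : Prop :=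
  (∀ i o, p i o = 0 ∨ p i o = 1) ∧ (∀ o, ∑ i, p i o = 1)

/-- Pareto optimality among 0/1 allocation matrices (w.r.t. SD comparisons). -/
def ParetoOptAlloc (n m : ℕ) (pref : Fin n → Pref m)
    (p : Fin n → Fin m → ℝ) : Prop :=
  ZeroOneAlloc n m p ∧
  ¬ ∃ q : Fin n → Fin m → ℝ, ZeroOneAlloc n m q ∧
      (∀ i, sdPrefers (pref i) (q i) (p i)) ∧
      ∃ j, sdStrict (pref j) (q j) (p j)

/-- `p` is the outcome of the priority (serial dictator) rule for the agent
ordering `σ`: it is a discrete assignment in which, sequentially, agent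
`σ k` receives his `c` most preferred objects among those not taken by the
earlier agents `σ 0, …, σ (k-1)`. -/
def PriorityOutcome (n m c : ℕ) (pref : Fin n → Pref m) (σ : Equiv.Perm (Fin n))
    (p : Fin n → Fin m → ℝ) : Prop :=
  IsDiscreteAlloc n m p ∧ IsRandomAssignment n m c p ∧
  ∀ (k : Fin n) (o : Fin m), (∀ j, j < k → p (σ j) o ≠ 1) →
    (p (σ k) o = 1 ↔
      (univ.filter (fun o' => (∀ j, j < k → p (σ j) o' ≠ 1) ∧ pref (σ k) o' o)).card ≤ c)

/-- The strict preference induced by a ranking function (smaller rank =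
more preferred). -/
def prefOfRank {m : ℕ} (r : Fin m → ℕ) : Pref m := fun a b => r a ≤ r b

private lemma strictPrefOfRank {m : ℕ} (r : Fin m → ℕ) (hr : Function.Injective r) :
    IsStrictPref (prefOfRank r) :=
  ⟨fun _ => le_refl _, fun _ _ _ => le_trans, fun _ _ h1 h2 => hr (le_antisymm h1 h2),
    fun _ _ => le_total _ _⟩

private lemma validP : ValidProfile ![prefOfRank ![0, 1, 2, 3], prefOfRank ![1, 0, 2, 3]] := by
  intro i
  fin_cases i
  · exact strictPrefOfRank ![0, 1, 2, 3] (by decide)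
  · exact strictPrefOfRank ![1, 0, 2, 3] (by decide)

/-- With `n = 2`, `c = 2`, objects `a,b,c,d` (indices
`0,1,2,3`): any anonymous, neutral, SD-efficient assignment rule must, at the
profile where agent 1 reports `a ≻ b ≻ c ≻ d` and agent 2 reports
`b ≻ a ≻ c ≻ d`, return the assignment giving agent 1 object `a` with
probability `1` and `c, d` each with probability `1/2`, and agent 2 object `b`
with probability `1` and `c, d` each with probability `1/2`. -/
theorem rule_value_at_abcd_bacd_profile
    (f : (Fin 2 → Pref 4) → Fin 2 → Fin 4 → ℝ)
    (hRA : ∀ pref, ValidProfile pref → IsRandomAssignment 2 4 2 (f pref))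
    (hAnon : Anonymous 2 4 f) (hNeut : Neutral 2 4 f)
    (hEff : ∀ pref, ValidProfile pref → SDEfficientAssignment 2 4 2 pref (f pref)) :
    f ![prefOfRank ![0, 1, 2, 3], prefOfRank ![1, 0, 2, 3]] =
      ![![1, 0, 1/2, 1/2], ![0, 1, 1/2, 1/2]] := by
  set P : Fin 2 → Pref 4 := ![prefOfRank ![0, 1, 2, 3], prefOfRank ![1, 0, 2, 3]] with hP
  have hV : ValidProfile P := validP
  obtain ⟨hbd, hcol, hrow⟩ := hRA P hV
  -- symmetry: swapping agents and objects a,b fixes the profile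
  have h0 : ∀ x : Fin 4, (![0,1,2,3] : Fin 4 → ℕ) ((Equiv.swap 0 1).symm x) = ![1,0,2,3] x := by
    decide
  have h1 : ∀ x : Fin 4, (![1,0,2,3] : Fin 4 → ℕ) ((Equiv.swap 0 1).symm x) = ![0,1,2,3] x := by
    decide
  have e0 : (fun a b => P 0 ((Equiv.swap (0:Fin 4) 1).symm a) ((Equiv.swap (0:Fin 4) 1).symm b))
      = P 1 := by
    funext a b
    show (prefOfRank ![0,1,2,3] _ _) = (prefOfRank ![1,0,2,3] a b)
    simp only [prefOfRank, h0]
  have e1 : (fun a b => P 1 ((Equiv.swap (0:Fin 4) 1).symm a) ((Equiv.swap (0:Fin 4) 1).symm b))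
      = P 0 := by
    funext a b
    show (prefOfRank ![1,0,2,3] _ _) = (prefOfRank ![0,1,2,3] a b)
    simp only [prefOfRank, h1]
  have hperm : (fun j a b => P j ((Equiv.swap (0:Fin 4) 1).symm a) ((Equiv.swap (0:Fin 4) 1).symm b))
      = fun j => P (Equiv.swap (0:Fin 2) 1 j) := by
    funext j
    fin_cases j
    · exact e0.trans (congrArg P (by decide))
    · exact e1.trans (congrArg P (by decide))
  have hsym : ∀ o : Fin 4, f P 1 ((Equiv.swap (0:Fin 4) 1) o) = f P 0 o := by
    intro o
    have hn := hNeut P (Equiv.swap (0:Fin 4) 1) hV 0 ((Equiv.swap (0:Fin 4) 1) o)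
    rw [Equiv.symm_apply_apply] at hn
    rw [hperm] at hn
    have ha := hAnon P (Equiv.swap (0:Fin 2) 1) hV 0
    rw [ha, Equiv.swap_apply_left] at hn
    exact hn
  have h10 : f P 1 0 = f P 0 1 := by simpa using hsym 1
  have h11 : f P 1 1 = f P 0 0 := by simpa using hsym 0
  have h12 : f P 1 2 = f P 0 2 := by
    simpa [Equiv.swap_apply_of_ne_of_ne (show (2:Fin 4) ≠ 0 by decide) (show (2:Fin 4) ≠ 1 by decide)] using hsym 2
  have h13 : f P 1 3 = f P 0 3 := by
    simpa [Equiv.swap_apply_of_ne_of_ne (show (3:Fin 4) ≠ 0 by decide) (show (3:Fin 4) ≠ 1 by decide)] using hsym 3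
  have hc0 : f P 0 0 + f P 1 0 = 1 := by simpa [Fin.sum_univ_two] using hcol 0
  have hc2 : f P 0 2 + f P 1 2 = 1 := by simpa [Fin.sum_univ_two] using hcol 2
  have hc3 : f P 0 3 + f P 1 3 = 1 := by simpa [Fin.sum_univ_two] using hcol 3
  have hp02 : f P 0 2 = 1/2 := by rw [h12] at hc2; linarith
  have hp03 : f P 0 3 = 1/2 := by rw [h13] at hc3; linarith
  have hab : f P 0 0 + f P 0 1 = 1 := by rw [h10] at hc0; exact hc0
  have hr0 : f P 0 0 + f P 0 1 + f P 0 2 + f P 0 3 = 2 := by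
    have := hrow 0; rw [Fin.sum_univ_four] at this; push_cast at this; linarith
  have hr1 : f P 1 0 + f P 1 1 + f P 1 2 + f P 1 3 = 2 := by
    have := hrow 1; rw [Fin.sum_univ_four] at this; push_cast at this; linarith
  -- SD-efficiency forces f P 0 0 = 1
  have hp00 : f P 0 0 = 1 := by
    by_contra h
    have hlt : f P 0 0 < 1 := lt_of_le_of_ne (hbd 0 0).2 h
    apply hEff P hV
    set q : Fin 2 → Fin 4 → ℝ := ![![1, 0, 1/2, 1/2], ![0, 1, 1/2, 1/2]] with hq
    have hcond0 : ∀ a b : Fin 4, P 0 a b ↔ (![0,1,2,3] : Fin 4 → ℕ) a ≤ ![0,1,2,3] b :=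
      fun _ _ => Iff.rfl
    have hcond1 : ∀ a b : Fin 4, P 1 a b ↔ (![1,0,2,3] : Fin 4 → ℕ) a ≤ ![1,0,2,3] b :=
      fun _ _ => Iff.rfl
    have hsd0 : sdPrefers (P 0) (q 0) (f P 0) := by
      intro o
      fin_cases o <;>
        · simp [hq, hcond0, Finset.sum_filter, Fin.sum_univ_four]
          try linarith [(hbd 0 0).2, (hbd 0 1).2, hab, hp02, hp03, hr0]
    have hsd1 : sdPrefers (P 1) (q 1) (f P 1) := by
      intro o
      fin_cases o <;>
        · simp [hq, hcond1, Finset.sum_filter, Fin.sum_univ_four]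
          try linarith [(hbd 1 0).2, (hbd 1 1).2, h10, h11, h12, h13, hab, hp02, hp03, hr1]
    refine ⟨q, ⟨?_, ?_, ?_⟩, ?_, ⟨0, hsd0, ?_⟩⟩
    · intro i o; fin_cases i <;> fin_cases o <;> norm_num [hq]
    · intro o; fin_cases o <;> simp [hq, Fin.sum_univ_two] <;> norm_num
    · intro i; fin_cases i <;> simp [hq, Fin.sum_univ_four] <;> norm_num
    · intro i; fin_cases i
      · exact hsd0
      · exact hsd1
    · intro hcon
      have hc := hcon 0
      simp [hq, hcond0, Finset.sum_filter, Fin.sum_univ_four] at hc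
      linarith
  have hp01 : f P 0 1 = 0 := by linarith
  funext i o
  fin_cases i <;> fin_cases o
  · show f P 0 0 = 1; exact hp00
  · show f P 0 1 = 0; exact hp01
  · show f P 0 2 = 1/2; exact hp02
  · show f P 0 3 = 1/2; exact hp03
  · show f P 1 0 = 0; rw [h10]; exact hp01
  · show f P 1 1 = 1; rw [h11]; exact hp00
  · show f P 1 2 = 1/2; rw [h12]; exact hp02
  · show f P 1 3 = 1/2; rw [h13]; exact hp03
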